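/- Fix k ≥ 2. Let L : C[0,π] → C[0,π] be a continuous linear operator with L(C₀[0,π]) ⊆ C₀[0,π], and set K = L − ρLρ. Then for every f ∈ C(S^k) and every ξ ∈ S^k, ∫_{SO(k+1)} (T_b ∘ K^# ∘ T_{b^{-1}}) f(ξ) dμ_{k+1}(b) = 0. -/

import Mathlib

open MeasureTheory Matrix Metric Real
open scoped RealInnerProductSpace ENNReal
noncomputable section

abbrev Eucl (d : ℕ) : Type := EuclideanSpace ℝ (Fin d)
abbrev Sph (d : ℕ) := Metric.sphere (0 : Eucl d) 1

/-- The north pole `1^k = (0,…,0,1)` of the sphere `S^k ⊆ ℝ^{k+1}`. -/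
def npole (m : ℕ) : Sph (m + 1) :=
  ⟨EuclideanSpace.single (Fin.last m) (1 : ℝ), by simp⟩

/-- The south pole `-1^k = (0,…,0,-1)`. -/
def spole (m : ℕ) : Sph (m + 1) :=
  ⟨EuclideanSpace.single (Fin.last m) (-1 : ℝ), by simp⟩

lemma sphere_sum_sq {d : ℕ} (y : Sph d) : ∑ i : Fin d, (y.1 i) ^ 2 = 1 := by
  have hy : ‖y.1‖ = 1 := by simpa using y.2
  rw [EuclideanSpace.norm_eq] at hy
  have h' : Real.sqrt (∑ i, ‖y.1 i‖ ^ 2) ^ 2 = 1 := by rw [hy]; norm_num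
  rw [Real.sq_sqrt (by positivity)] at h'
  simpa [Real.norm_eq_abs, sq_abs] using h'

lemma phi_mem {m : ℕ} (t : ℝ) (y : Sph (m + 1)) :
    (WithLp.equiv 2 (Fin (m + 2) → ℝ)).symm
      (Fin.snoc (fun i => Real.sin t * ((WithLp.equiv 2 (Fin (m + 1) → ℝ)) y.1) i) (Real.cos t))
      ∈ Metric.sphere (0 : Eucl (m + 2)) 1 := by
  rw [mem_sphere_iff_norm, sub_zero, EuclideanSpace.norm_eq]
  have hw : (∑ i : Fin (m + 2),
      ‖(WithLp.equiv 2 (Fin (m + 2) → ℝ)).symm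
        (Fin.snoc (fun i => Real.sin t * ((WithLp.equiv 2 (Fin (m + 1) → ℝ)) y.1) i)
          (Real.cos t)) i‖ ^ 2) = 1 := by
    simp only [WithLp.equiv_symm_apply, PiLp.toLp_apply, Real.norm_eq_abs, sq_abs]
    rw [Fin.sum_univ_castSucc]
    simp only [Fin.snoc_castSucc, Fin.snoc_last]
    have hmul : (∑ i : Fin (m + 1),
        (Real.sin t * ((WithLp.equiv 2 (Fin (m + 1) → ℝ)) y.1) i) ^ 2)
        = Real.sin t ^ 2 * ∑ i : Fin (m + 1), (y.1 i) ^ 2 := by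
      rw [Finset.mul_sum]
      refine Finset.sum_congr rfl fun i _ => ?_
      have : ((WithLp.equiv 2 (Fin (m + 1) → ℝ)) y.1) i = y.1 i := rfl
      rw [this]; ring
    rw [hmul, sphere_sum_sq, mul_one]
    exact Real.sin_sq_add_cos_sq t
  rw [hw]
  exact Real.sqrt_one

/-- The map `Φ_k(t, y) = (y sin t, cos t)` from `ℝ × S^{k-1}` to `S^k`. -/
def phi {m : ℕ} (t : ℝ) (y : Sph (m + 1)) : Sph (m + 2) :=
  ⟨(WithLp.equiv 2 (Fin (m + 2) → ℝ)).symm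
      (Fin.snoc (fun i => Real.sin t * ((WithLp.equiv 2 (Fin (m + 1) → ℝ)) y.1) i) (Real.cos t)),
    phi_mem t y⟩

/-- The latitude `t ∈ [0,π]` of a point on `S^k`, i.e. `arccos` of the last coordinate. -/
def lat {m : ℕ} (ξ : Sph (m + 2)) : ℝ := Real.arccos (ξ.1 (Fin.last (m + 1)))

lemma lat_mem_Icc {m : ℕ} (ξ : Sph (m + 2)) : lat ξ ∈ Set.Icc (0 : ℝ) π :=
  ⟨Real.arccos_nonneg _, Real.arccos_le_pi _⟩

/-- The "equatorial part" of a point of `S^k`: its first `k` coordinates. -/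
def eqpart {m : ℕ} (ξ : Sph (m + 2)) : Eucl (m + 1) :=
  (WithLp.equiv 2 (Fin (m + 1) → ℝ)).symm (fun i => ξ.1 i.castSucc)

open scoped Classical in
/-- The longitudinal direction of a point of `S^k`, an element of `S^{k-1}`; at the poles it is
(by convention) the north pole `1^{k-1}` of `S^{k-1}`. -/
def ydir {m : ℕ} (ξ : Sph (m + 2)) : Sph (m + 1) :=
  if h : eqpart ξ = 0 then npole m
  else ⟨‖eqpart ξ‖⁻¹ • eqpart ξ, by
    rw [mem_sphere_iff_norm, sub_zero, norm_smul, norm_inv, norm_norm,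
      inv_mul_cancel₀ (norm_ne_zero_iff.mpr h)]⟩

lemma continuous_phi_left {m : ℕ} (y : Sph (m + 1)) :
    Continuous fun t : ℝ => (phi t y : Sph (m + 2)) := by
  apply Continuous.subtype_mk
  refine (PiLp.continuous_toLp 2 (fun _ : Fin (m + 2) => ℝ)).comp ?_
  apply continuous_pi
  intro j
  refine Fin.lastCases ?_ ?_ j
  · simpa [Fin.snoc_last] using Real.continuous_cos
  · intro i
    simp only [Fin.snoc_castSucc]
    exact Real.continuous_sin.mul continuous_const

lemma continuous_phi_right {m : ℕ} (t : ℝ) :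
    Continuous fun y : Sph (m + 1) => (phi t y : Sph (m + 2)) := by
  apply Continuous.subtype_mk
  refine (PiLp.continuous_toLp 2 (fun _ : Fin (m + 2) => ℝ)).comp ?_
  apply continuous_pi
  intro j
  refine Fin.lastCases ?_ ?_ j
  · simpa [Fin.snoc_last] using continuous_const (y := Real.cos t)
  · intro i
    simp only [Fin.snoc_castSucc]
    exact continuous_const.mul
      ((continuous_apply i).comp ((PiLp.continuous_ofLp 2 (fun _ : Fin (m + 1) => ℝ)).comp
        continuous_subtype_val))

/-- The interval `[0,π]`. -/
abbrev IccPi : Set ℝ := Set.Icc (0 : ℝ) π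

/-- `0` as an element of `[0,π]`. -/
def loPt : IccPi := ⟨0, Set.left_mem_Icc.mpr Real.pi_nonneg⟩

/-- `π` as an element of `[0,π]`. -/
def hiPt : IccPi := ⟨π, Set.right_mem_Icc.mpr Real.pi_nonneg⟩

/-- The slice of a continuous function on `S^k` along the meridian through `y ∈ S^{k-1}`:
`t ↦ f(Φ_k(t,y))` as an element of `C[0,π]`. -/
def merid {m : ℕ} (f : C(Sph (m + 2), ℝ)) (y : Sph (m + 1)) : C(IccPi, ℝ) :=
  ⟨fun t => f (phi t.1 y), by
    exact f.continuous.comp ((continuous_phi_left y).comp continuous_subtype_val)⟩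

/-- The latitudinal operator `L^#` acting on continuous functions on `S^k`. -/
def latOp {m : ℕ} (L : C(IccPi, ℝ) →L[ℝ] C(IccPi, ℝ)) (f : C(Sph (m + 2), ℝ))
    (ξ : Sph (m + 2)) : ℝ :=
  L (merid f (ydir ξ)) ⟨lat ξ, lat_mem_Icc ξ⟩

/-- The reflection `t ↦ π - t` of `[0,π]`. -/
def reflI : C(IccPi, IccPi) :=
  ⟨fun t => ⟨π - t.1, ⟨by linarith [t.2.2], by linarith [t.2.1]⟩⟩,
    Continuous.subtype_mk (continuous_const.sub continuous_subtype_val) _⟩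

/-- The reflection operator `ρ g(t) = g(π - t)` on `C[0,π]`. -/
def reflOp : C(IccPi, ℝ) →L[ℝ] C(IccPi, ℝ) where
  toFun g := g.comp reflI
  map_add' g h := rfl
  map_smul' c g := rfl
  cont := ContinuousMap.continuous_precomp reflI

/-- The reflection of the sphere `S^k` changing the sign of the last coordinate. -/
def reflSph {m : ℕ} (ξ : Sph (m + 2)) : Sph (m + 2) :=
  ⟨(WithLp.equiv 2 (Fin (m + 2) → ℝ)).symm
      (Fin.snoc (fun i => ξ.1 i.castSucc) (-(ξ.1 (Fin.last (m + 1))))), by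
    rw [mem_sphere_iff_norm, sub_zero, EuclideanSpace.norm_eq]
    have hw : (∑ i : Fin (m + 2),
        ‖(WithLp.equiv 2 (Fin (m + 2) → ℝ)).symm
          (Fin.snoc (fun i => ξ.1 i.castSucc) (-(ξ.1 (Fin.last (m + 1))))) i‖ ^ 2) = 1 := by
      simp only [WithLp.equiv_symm_apply, PiLp.toLp_apply, Real.norm_eq_abs, sq_abs]
      rw [Fin.sum_univ_castSucc]
      simp only [Fin.snoc_castSucc, Fin.snoc_last, neg_sq]
      have h := sphere_sum_sq ξ
      rw [Fin.sum_univ_castSucc] at h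
      exact h
    rw [hw]
    exact Real.sqrt_one⟩

lemma continuous_reflSph {m : ℕ} : Continuous (reflSph (m := m)) := by
  apply Continuous.subtype_mk
  refine (PiLp.continuous_toLp 2 (fun _ : Fin (m + 2) => ℝ)).comp ?_
  apply continuous_pi
  intro j
  refine Fin.lastCases ?_ ?_ j
  · simp only [Fin.snoc_last]
    exact ((continuous_apply (Fin.last (m + 1))).comp
      ((PiLp.continuous_ofLp 2 (fun _ : Fin (m + 2) => ℝ)).comp continuous_subtype_val)).neg
  · intro i
    simp only [Fin.snoc_castSucc]
    exact (continuous_apply i.castSucc).comp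
      ((PiLp.continuous_ofLp 2 (fun _ : Fin (m + 2) => ℝ)).comp continuous_subtype_val)

/-- The reflection `ρ^#` as a continuous self-map of `S^k`. -/
def reflSphCM {m : ℕ} : C(Sph (m + 2), Sph (m + 2)) := ⟨reflSph, continuous_reflSph⟩

instance (d : ℕ) : MeasurableSpace (Matrix (Fin d) (Fin d) ℝ) :=
  inferInstanceAs (MeasurableSpace (Fin d → Fin d → ℝ))

/-- The special orthogonal group `SO(d)` as a subgroup of the orthogonal group. -/
def SOsub (d : ℕ) : Subgroup ↥(Matrix.orthogonalGroup (Fin d) ℝ) where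
  carrier := {A | Matrix.det (A : Matrix (Fin d) (Fin d) ℝ) = 1}
  one_mem' := by simp
  mul_mem' := by
    intro a b ha hb
    simp only [Set.mem_setOf_eq] at *
    rw [Matrix.UnitaryGroup.mul_val, Matrix.det_mul, ha, hb, mul_one]
  inv_mem' := by
    intro a ha
    simp only [Set.mem_setOf_eq] at *
    rw [Matrix.UnitaryGroup.inv_val, Matrix.star_eq_conjTranspose,
      show ((a : Matrix (Fin d) (Fin d) ℝ))ᴴ = (a : Matrix (Fin d) (Fin d) ℝ)ᵀ from rfl,
      Matrix.det_transpose, ha]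

/-- The special orthogonal group `SO(d)`. -/
abbrev SOg (d : ℕ) := ↥(SOsub d)

/-- The matrix of an element of `SO(d)`. -/
abbrev SOg.mat {d : ℕ} (b : SOg d) : Matrix (Fin d) (Fin d) ℝ :=
  ((b : ↥(Matrix.orthogonalGroup (Fin d) ℝ)) : Matrix (Fin d) (Fin d) ℝ)

lemma SOg.matT_mul {d : ℕ} (b : SOg d) : b.matᵀ * b.mat = 1 := by
  have h := (b : ↥(Matrix.orthogonalGroup (Fin d) ℝ)).2.1
  simpa [Matrix.star_eq_conjTranspose] using h

lemma mulVec_mem_sphere {d : ℕ} (b : SOg d) (x : Sph d) :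
    (WithLp.equiv 2 (Fin d → ℝ)).symm (b.mat.mulVec ((WithLp.equiv 2 (Fin d → ℝ)) x.1)) ∈
      Metric.sphere (0 : Eucl d) 1 := by
  have hx : ‖x.1‖ = 1 := by simpa using x.2
  rw [mem_sphere_iff_norm, sub_zero]
  have key : ∀ w : Eucl d,
      ‖w‖ ^ 2 = (WithLp.equiv 2 (Fin d → ℝ)) w ⬝ᵥ (WithLp.equiv 2 (Fin d → ℝ)) w := by
    intro w
    rw [EuclideanSpace.norm_eq, Real.sq_sqrt (by positivity)]
    simp [dotProduct, sq_abs, pow_two]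
  set v : Fin d → ℝ := (WithLp.equiv 2 (Fin d → ℝ)) x.1 with hv
  have hdot : (b.mat.mulVec v) ⬝ᵥ (b.mat.mulVec v) = v ⬝ᵥ v := by
    rw [Matrix.dotProduct_mulVec, ← Matrix.mulVec_transpose, Matrix.mulVec_mulVec, SOg.matT_mul,
      Matrix.one_mulVec]
  have h1 : ‖(WithLp.equiv 2 (Fin d → ℝ)).symm (b.mat.mulVec v)‖ ^ 2 = (1 : ℝ) := by
    rw [key, Equiv.apply_symm_apply, hdot, ← key, hx, one_pow]
  nlinarith [norm_nonneg ((WithLp.equiv 2 (Fin d → ℝ)).symm (b.mat.mulVec v))]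

/-- The rotation action of `SO(d)` on the sphere `S^{d-1}`. -/
def rot {d : ℕ} (b : SOg d) (x : Sph d) : Sph d :=
  ⟨(WithLp.equiv 2 (Fin d → ℝ)).symm (b.mat.mulVec ((WithLp.equiv 2 (Fin d → ℝ)) x.1)),
    mulVec_mem_sphere b x⟩

lemma continuous_rot {d : ℕ} (b : SOg d) : Continuous (rot b) := by
  apply Continuous.subtype_mk
  refine (PiLp.continuous_toLp 2 (fun _ : Fin d => ℝ)).comp ?_
  have : Continuous fun v : Fin d → ℝ => b.mat.mulVec v :=
    b.mat.mulVecLin.continuous_of_finiteDimensional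
  exact this.comp ((PiLp.continuous_ofLp 2 (fun _ : Fin d => ℝ)).comp continuous_subtype_val)

/-- Rotation as a continuous self-map of the sphere. -/
def rotCM {d : ℕ} (b : SOg d) : C(Sph d, Sph d) := ⟨rot b, continuous_rot b⟩

/-- The rotation operator `T_b f = f ∘ b⁻¹` on continuous functions on the sphere. -/
def Trot {d : ℕ} (b : SOg d) (f : C(Sph d, ℝ)) : C(Sph d, ℝ) := f.comp (rotCM b⁻¹)

/-- The rotation operator `T_b` on `L²` of the sphere. -/
def TrotL2 {d : ℕ} (σ : Measure (Sph d)) (hσ : ∀ b : SOg d, MeasurePreserving (rot b) σ σ)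
    (b : SOg d) : Lp ℝ 2 σ →L[ℝ] Lp ℝ 2 σ :=
  (Lp.compMeasurePreservingₗᵢ ℝ (rot b⁻¹) (hσ b⁻¹)).toContinuousLinearMap

/-- The latitude-`t` circle slice of a continuous function on `S^k`:
`y ↦ f(Φ_k(t,y))` as an element of `C(S^{k-1}, ℝ)`. -/
def ringSlice {m : ℕ} (f : C(Sph (m + 2), ℝ)) (t : ℝ) : C(Sph (m + 1), ℝ) :=
  ⟨fun y => f (phi t y), f.continuous.comp (continuous_phi_right t)⟩

open scoped Classical in
/-- The lifted operator `P̂` acting on functions on `S^k` (with value `0` at the poles,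
and defined via the latitude/longitude decomposition elsewhere). -/
def hatOp {m : ℕ} (P : C(Sph (m + 1), ℝ) →L[ℝ] C(Sph (m + 1), ℝ)) (g : Sph (m + 2) → ℝ)
    (ξ : Sph (m + 2)) : ℝ :=
  if ξ = npole (m + 1) ∨ ξ = spole (m + 1) then 0
  else if h : Continuous g then P (ringSlice ⟨g, h⟩ (lat ξ)) (ydir ξ) else 0

/-- The spherical coordinates `Ψ_n : ℝ^n → S^n` given recursively by `Ψ_1(t) = (sin t, cos t)`
and `Ψ_{n+1}(v, t) = (Ψ_n(v) sin t, cos t)`. -/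
def Psi : (n : ℕ) → (Fin n → ℝ) → Sph (n + 1)
  | 0, _ => npole 0
  | n + 1, v => phi (v (Fin.last n)) (Psi n (fun i => v i.castSucc))

/-- The patch `Ψ_n([a 0, b 0] × ⋯ × [a (n-1), b (n-1)]) ⊆ S^n`. -/
def patchSet (n : ℕ) (a b : Fin n → ℝ) : Set (Sph (n + 1)) :=
  Psi n '' {v | ∀ j, v j ∈ Set.Icc (a j) (b j)}

-- ===== auxiliary lemmas =====
section MarcinAux

open Real

/-- Diagonal entries of the flip matrix: `-1` at indices `0` and `last`, `1` elsewhere. -/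
def negIdx (m : ℕ) : Fin (m + 2) → ℝ := fun i =>
  if i = 0 ∨ i = Fin.last (m + 1) then -1 else 1

/-- The flip matrix `diag(-1, 1, …, 1, -1)`. -/
def cmat (m : ℕ) : Matrix (Fin (m + 2)) (Fin (m + 2)) ℝ := Matrix.diagonal (negIdx m)

lemma star_cmat (m : ℕ) : star (cmat m) = cmat m := by
  rw [Matrix.star_eq_conjTranspose, cmat, Matrix.diagonal_conjTranspose]
  congr 1

lemma cmat_mul_cmat (m : ℕ) : cmat m * cmat m = 1 := by
  rw [cmat, Matrix.diagonal_mul_diagonal]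
  have h : (fun i => negIdx m i * negIdx m i) = fun _ : Fin (m + 2) => (1 : ℝ) := by
    funext i
    simp only [negIdx]
    split_ifs <;> norm_num
  rw [h, Matrix.diagonal_one]

lemma det_cmat (m : ℕ) : (cmat m).det = 1 := by
  rw [cmat, Matrix.det_diagonal]
  have h : (Finset.univ.filter fun i : Fin (m + 2) => i = 0 ∨ i = Fin.last (m + 1))
      = {0, Fin.last (m + 1)} := by
    ext i
    simp [Finset.mem_filter, Finset.mem_insert]
  rw [show (∏ i, negIdx m i) = ∏ i : Fin (m + 2),
      (if i = 0 ∨ i = Fin.last (m + 1) then (-1 : ℝ) else 1) from rfl,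
    Finset.prod_ite, Finset.prod_const, Finset.prod_const, h]
  have h0 : (0 : Fin (m + 2)) ≠ Fin.last (m + 1) := by
    simp [Fin.ext_iff]
  rw [Finset.card_insert_of_notMem (by simp [h0]), Finset.card_singleton]
  norm_num

/-- The flip matrix as an element of the orthogonal group. -/
def cOrth (m : ℕ) : ↥(Matrix.orthogonalGroup (Fin (m + 2)) ℝ) :=
  ⟨cmat m, by
    rw [Matrix.mem_orthogonalGroup_iff, show (cmat m)ᵀ = cmat m from by rw [cmat, Matrix.diagonal_transpose]]
    exact cmat_mul_cmat m⟩

/-- The flip matrix as an element of `SO(m+2)`. -/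
def cSO (m : ℕ) : SOg (m + 2) :=
  ⟨cOrth m, by
    show Matrix.det _ = 1
    exact det_cmat m⟩

lemma cSO_mat (m : ℕ) : (cSO m).mat = cmat m := rfl

lemma cSO_mul_self (m : ℕ) : cSO m * cSO m = 1 := by
  apply Subtype.ext; apply Subtype.ext
  exact cmat_mul_cmat m

lemma cSO_inv (m : ℕ) : (cSO m)⁻¹ = cSO m := inv_eq_of_mul_eq_one_right (cSO_mul_self m)

end MarcinAux

section MarcinAux2

open Real

variable {m : ℕ}

lemma rot_val {d : ℕ} (b : SOg d) (x : Sph d) (j : Fin d) :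
    (rot b x).1 j = b.mat.mulVec (fun i => x.1 i) j := rfl

lemma mat_mul {d : ℕ} (a b : SOg d) : (a * b).mat = a.mat * b.mat := rfl

lemma rot_mul {d : ℕ} (a b : SOg d) (x : Sph d) : rot (a * b) x = rot a (rot b x) := by
  apply Subtype.ext
  ext j
  rw [rot_val, rot_val, mat_mul]
  have h : (fun i => (rot b x).1 i) = b.mat.mulVec (fun i => x.1 i) := by
    funext i; rw [rot_val]
  rw [h, Matrix.mulVec_mulVec]

lemma rot_cSO_apply (ξ : Sph (m + 2)) (j : Fin (m + 2)) :
    (rot (cSO m) ξ).1 j = negIdx m j * ξ.1 j := by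
  rw [rot_val, cSO_mat, cmat, Matrix.mulVec_diagonal]

/-- Negation of the first coordinate in `ℝ^{m+1}`. -/
def uvec (x : Eucl (m + 1)) : Eucl (m + 1) :=
  (WithLp.equiv 2 (Fin (m + 1) → ℝ)).symm (fun i => if i = 0 then -(x i) else x i)

lemma uvec_apply (x : Eucl (m + 1)) (i : Fin (m + 1)) :
    uvec x i = if i = 0 then -(x i) else x i := rfl

lemma uvec_uvec (x : Eucl (m + 1)) : uvec (uvec x) = x := by
  ext i
  simp only [uvec_apply]
  split_ifs <;> simp

lemma uvec_zero : uvec (0 : Eucl (m + 1)) = 0 := by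
  ext i
  rw [uvec_apply]
  split_ifs <;> simp

lemma uvec_smul (r : ℝ) (x : Eucl (m + 1)) : uvec (r • x) = r • uvec x := by
  ext i
  rw [uvec_apply]
  have h1 : (r • x) i = r * x i := rfl
  have h2 : (r • uvec x) i = r * uvec x i := rfl
  rw [h1, h2, uvec_apply]
  split_ifs <;> ring

lemma norm_uvec (x : Eucl (m + 1)) : ‖uvec x‖ = ‖x‖ := by
  rw [EuclideanSpace.norm_eq, EuclideanSpace.norm_eq]
  congr 1
  refine Finset.sum_congr rfl fun i _ => ?_
  rw [uvec_apply]
  split_ifs <;> simp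

lemma uvec_mem_sphere (y : Sph (m + 1)) : uvec y.1 ∈ Metric.sphere (0 : Eucl (m + 1)) 1 := by
  rw [mem_sphere_iff_norm, sub_zero, norm_uvec]
  simpa using y.2

/-- Negation of the first coordinate, as a self-map of the sphere. -/
def uSph (y : Sph (m + 1)) : Sph (m + 1) := ⟨uvec y.1, uvec_mem_sphere y⟩

lemma uSph_uSph (y : Sph (m + 1)) : uSph (uSph y) = y := Subtype.ext (uvec_uvec y.1)

lemma phi_val_castSucc (t : ℝ) (y : Sph (m + 1)) (i : Fin (m + 1)) :
    (phi t y).1 i.castSucc = Real.sin t * y.1 i := by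
  show ((WithLp.equiv 2 (Fin (m + 2) → ℝ)).symm _) i.castSucc = _
  simp [WithLp.equiv_symm_apply, PiLp.toLp_apply, Fin.snoc_castSucc]

lemma phi_val_last (t : ℝ) (y : Sph (m + 1)) :
    (phi t y).1 (Fin.last (m + 1)) = Real.cos t := by
  show ((WithLp.equiv 2 (Fin (m + 2) → ℝ)).symm _) (Fin.last (m + 1)) = _
  simp [WithLp.equiv_symm_apply, PiLp.toLp_apply, Fin.snoc_last]

lemma negIdx_last : negIdx m (Fin.last (m + 1)) = -1 := by simp [negIdx]

lemma negIdx_castSucc (i : Fin (m + 1)) :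
    negIdx m i.castSucc = if i = 0 then -1 else 1 := by
  have h1 : i.castSucc ≠ Fin.last (m + 1) := (Fin.castSucc_lt_last i).ne
  have h2 : i.castSucc = 0 ↔ i = 0 := by
    exact Fin.castSucc_eq_zero_iff
  simp only [negIdx, h1, or_false, h2]

lemma rot_cSO_phi (t : ℝ) (y : Sph (m + 1)) :
    rot (cSO m) (phi t y) = phi (π - t) (uSph y) := by
  apply Subtype.ext
  ext j
  induction j using Fin.lastCases with
  | last =>
    rw [rot_cSO_apply, phi_val_last, phi_val_last, negIdx_last, Real.cos_pi_sub]
    ring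
  | cast i =>
    rw [rot_cSO_apply, phi_val_castSucc, phi_val_castSucc, negIdx_castSucc, Real.sin_pi_sub]
    show _ = Real.sin t * uvec y.1 i
    rw [uvec_apply]
    split_ifs <;> ring

lemma lat_rot_cSO (ξ : Sph (m + 2)) : lat (rot (cSO m) ξ) = π - lat ξ := by
  unfold lat
  rw [rot_cSO_apply, negIdx_last, neg_one_mul, Real.arccos_neg]

lemma eqpart_apply (ξ : Sph (m + 2)) (i : Fin (m + 1)) :
    eqpart ξ i = ξ.1 i.castSucc := rfl

lemma eqpart_rot_cSO (ξ : Sph (m + 2)) : eqpart (rot (cSO m) ξ) = uvec (eqpart ξ) := by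
  ext i
  rw [uvec_apply]
  simp only [eqpart_apply]
  rw [rot_cSO_apply, negIdx_castSucc]
  split_ifs <;> ring

lemma uSph_npole (hm : 1 ≤ m) : uSph (npole m) = npole m := by
  apply Subtype.ext
  ext i
  show uvec (npole m).1 i = (npole m).1 i
  rw [uvec_apply]
  split_ifs with h
  · subst h
    have h0 : ((0 : Fin (m + 1)) : Fin (m + 1)) ≠ Fin.last m := by
      simp [Fin.ext_iff]
      omega
    show -((EuclideanSpace.single (Fin.last m) (1:ℝ)) 0) = (EuclideanSpace.single (Fin.last m) (1:ℝ)) 0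
    rw [EuclideanSpace.single_apply]
    simp [h0]
  · rfl

lemma ydir_rot_cSO (hm : 1 ≤ m) (ξ : Sph (m + 2)) :
    ydir (rot (cSO m) ξ) = uSph (ydir ξ) := by
  unfold ydir
  by_cases h : eqpart ξ = 0
  · rw [dif_pos h, dif_pos (by rw [eqpart_rot_cSO, h, uvec_zero]), uSph_npole hm]
  · have h' : eqpart (rot (cSO m) ξ) ≠ 0 := by
      rw [eqpart_rot_cSO]
      intro hc
      apply h
      have := congrArg uvec hc
      rwa [uvec_uvec, uvec_zero] at this
    rw [dif_neg h', dif_neg h]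
    apply Subtype.ext
    show ‖eqpart (rot (cSO m) ξ)‖⁻¹ • eqpart (rot (cSO m) ξ) = uvec (‖eqpart ξ‖⁻¹ • eqpart ξ)
    rw [eqpart_rot_cSO, norm_uvec, uvec_smul]

end MarcinAux2

section MarcinAux3

open Real

variable {m : ℕ}

lemma reflI_reflI (t : IccPi) : reflI (reflI t) = t := by
  apply Subtype.ext
  show π - (π - t.1) = t.1
  ring

lemma reflOp_reflOp (h : C(IccPi, ℝ)) : reflOp (reflOp h) = h := by
  ext t
  show h (reflI (reflI t)) = h t
  rw [reflI_reflI]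

lemma K_reflOp (L : C(IccPi, ℝ) →L[ℝ] C(IccPi, ℝ)) (h : C(IccPi, ℝ)) :
    (L - reflOp.comp (L.comp reflOp)) (reflOp h)
      = - reflOp ((L - reflOp.comp (L.comp reflOp)) h) := by
  simp only [ContinuousLinearMap.sub_apply, ContinuousLinearMap.comp_apply, reflOp_reflOp,
    map_sub]
  abel

lemma rotCM_apply {d : ℕ} (b : SOg d) (x : Sph d) : rotCM b x = rot b x := rfl

lemma merid_apply (g : C(Sph (m + 2), ℝ)) (y : Sph (m + 1)) (t : IccPi) :
    merid g y t = g (phi t.1 y) := rfl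

lemma merid_comp_cSO (g : C(Sph (m + 2), ℝ)) (y : Sph (m + 1)) :
    merid (g.comp (rotCM (cSO m))) y = reflOp (merid g (uSph y)) := by
  ext t
  show g (rot (cSO m) (phi t.1 y)) = merid g (uSph y) (reflI t)
  rw [rot_cSO_phi, merid_apply]
  rfl

lemma latOp_flip (hm : 1 ≤ m) (L : C(IccPi, ℝ) →L[ℝ] C(IccPi, ℝ)) (g : C(Sph (m + 2), ℝ))
    (η : Sph (m + 2)) :
    latOp (L - reflOp.comp (L.comp reflOp)) (g.comp (rotCM (cSO m))) (rot (cSO m) η)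
      = - latOp (L - reflOp.comp (L.comp reflOp)) g η := by
  set K := L - reflOp.comp (L.comp reflOp) with hK
  unfold latOp
  rw [ydir_rot_cSO hm, merid_comp_cSO, uSph_uSph, K_reflOp]
  rw [ContinuousMap.neg_apply]
  congr 1
  show (K (merid g (ydir η))) (reflI ⟨lat (rot (cSO m) η), lat_mem_Icc _⟩) = _
  congr 1
  apply Subtype.ext
  show π - lat (rot (cSO m) η) = lat η
  rw [lat_rot_cSO]
  ring

lemma F_flip (hm : 1 ≤ m) (L : C(IccPi, ℝ) →L[ℝ] C(IccPi, ℝ)) (f : C(Sph (m + 2), ℝ))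
    (ξ : Sph (m + 2)) (b : SOg (m + 2)) :
    latOp (L - reflOp.comp (L.comp reflOp)) (f.comp (rotCM (b * cSO m))) (rot (b * cSO m)⁻¹ ξ)
      = - latOp (L - reflOp.comp (L.comp reflOp)) (f.comp (rotCM b)) (rot b⁻¹ ξ) := by
  have h1 : rot (b * cSO m)⁻¹ ξ = rot (cSO m) (rot b⁻¹ ξ) := by
    rw [_root_.mul_inv_rev, cSO_inv, rot_mul]
  have h2 : f.comp (rotCM (b * cSO m)) = (f.comp (rotCM b)).comp (rotCM (cSO m)) := by
    ext x
    show f (rot (b * cSO m) x) = f (rot b (rot (cSO m) x))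
    rw [rot_mul]
  rw [h1, h2, latOp_flip hm]

end MarcinAux3

section MarcinAux4

open Real

variable {m : ℕ}

instance (d : ℕ) : BorelSpace (Matrix (Fin d) (Fin d) ℝ) :=
  inferInstanceAs (BorelSpace (Fin d → Fin d → ℝ))

instance (d : ℕ) : SecondCountableTopology (Matrix (Fin d) (Fin d) ℝ) :=
  inferInstanceAs (SecondCountableTopology (Fin d → Fin d → ℝ))

instance (d : ℕ) : BorelSpace ↥(Matrix.orthogonalGroup (Fin d) ℝ) := Subtype.borelSpace _

instance (d : ℕ) : BorelSpace (SOg d) := Subtype.borelSpace _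

instance (d : ℕ) : SecondCountableTopology ↥(Matrix.orthogonalGroup (Fin d) ℝ) :=
  inferInstanceAs (SecondCountableTopology
    ↥((Matrix.orthogonalGroup (Fin d) ℝ : Set (Matrix (Fin d) (Fin d) ℝ))))

instance (d : ℕ) : SecondCountableTopology (SOg d) :=
  inferInstanceAs (SecondCountableTopology
    ↥((SOsub d : Set ↥(Matrix.orthogonalGroup (Fin d) ℝ))))

lemma continuous_matFun {d : ℕ} : Continuous fun b : SOg d => b.mat :=
  continuous_subtype_val.comp continuous_subtype_val

lemma mat_inv {d : ℕ} (b : SOg d) : SOg.mat b⁻¹ = (SOg.mat b)ᵀ := by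
  have h : SOg.mat b⁻¹ = star (SOg.mat b) :=
    Matrix.UnitaryGroup.inv_val (b : ↥(Matrix.orthogonalGroup (Fin d) ℝ))
  rw [h]
  ext i j
  simp [Matrix.star_apply]

lemma continuous_invSOg {d : ℕ} : Continuous fun b : SOg d => b⁻¹ := by
  apply continuous_induced_rng.2
  apply continuous_induced_rng.2
  show Continuous fun b : SOg d => SOg.mat b⁻¹
  have h : (fun b : SOg d => SOg.mat b⁻¹) = fun b : SOg d => (SOg.mat b)ᵀ :=
    funext mat_inv
  rw [h]
  exact continuous_matFun.matrix_transpose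

lemma continuous_mulSOg {d : ℕ} : Continuous fun p : SOg d × SOg d => p.1 * p.2 := by
  apply continuous_induced_rng.2
  apply continuous_induced_rng.2
  show Continuous fun p : SOg d × SOg d => SOg.mat (p.1 * p.2)
  have h : (fun p : SOg d × SOg d => SOg.mat (p.1 * p.2))
      = fun p : SOg d × SOg d => p.1.mat * p.2.mat := rfl
  rw [h]
  exact (continuous_matFun.comp continuous_fst).matrix_mul
    (continuous_matFun.comp continuous_snd)

lemma continuous_rot2 {d : ℕ} : Continuous fun p : SOg d × Sph d => rot p.1 p.2 := by
  apply Continuous.subtype_mk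
  refine (PiLp.continuous_toLp 2 fun _ : Fin d => ℝ).comp ?_
  show Continuous fun p : SOg d × Sph d => fun j => ∑ i, p.1.mat j i * p.2.1 i
  apply continuous_pi
  intro j
  apply continuous_finset_sum
  intro i _
  have h1 : Continuous fun p : SOg d × Sph d => p.1.mat j i :=
    (continuous_apply i).comp ((continuous_apply j).comp
      (continuous_matFun.comp continuous_fst))
  have h2 : Continuous fun p : SOg d × Sph d => p.2.1 i :=
    (continuous_apply i).comp ((PiLp.continuous_ofLp 2 fun _ : Fin d => ℝ).comp
      (continuous_subtype_val.comp continuous_snd))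
  exact h1.mul h2

lemma continuous_phi2 : Continuous fun p : ℝ × Sph (m + 1) => phi p.1 p.2 := by
  apply Continuous.subtype_mk
  refine (PiLp.continuous_toLp 2 fun _ : Fin (m + 2) => ℝ).comp ?_
  apply continuous_pi
  intro j
  induction j using Fin.lastCases with
  | last =>
    simpa [Fin.snoc_last, Function.comp_def] using Real.continuous_cos.comp (continuous_fst :
      Continuous fun p : ℝ × Sph (m + 1) => p.1)
  | cast i =>
    simp only [Fin.snoc_castSucc]
    exact (Real.continuous_sin.comp continuous_fst).mul
      ((continuous_apply i).comp ((PiLp.continuous_ofLp 2 fun _ : Fin (m + 1) => ℝ).comp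
        (continuous_subtype_val.comp continuous_snd)))

lemma continuous_lat : Continuous fun ξ : Sph (m + 2) => lat ξ :=
  Real.continuous_arccos.comp ((continuous_apply (Fin.last (m + 1))).comp
    ((PiLp.continuous_ofLp 2 fun _ : Fin (m + 2) => ℝ).comp continuous_subtype_val))

lemma continuous_eqpart : Continuous fun ξ : Sph (m + 2) => eqpart ξ := by
  refine (PiLp.continuous_toLp 2 fun _ : Fin (m + 1) => ℝ).comp ?_
  apply continuous_pi
  intro i
  exact (continuous_apply i.castSucc).comp
    ((PiLp.continuous_ofLp 2 fun _ : Fin (m + 2) => ℝ).comp continuous_subtype_val)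

lemma meas_ydir : Measurable (ydir : Sph (m + 2) → Sph (m + 1)) := by
  classical
  have prf : ∀ ξ : Sph (m + 2),
      (if eqpart ξ = 0 then ((npole m : Sph (m + 1)) : Eucl (m + 1))
        else ‖eqpart ξ‖⁻¹ • eqpart ξ) ∈ Metric.sphere (0 : Eucl (m + 1)) 1 := by
    intro ξ
    split_ifs with h
    · exact (npole m).2
    · rw [mem_sphere_iff_norm, sub_zero, norm_smul, norm_inv, norm_norm,
        inv_mul_cancel₀ (norm_ne_zero_iff.mpr h)]
  have h2 : (ydir : Sph (m + 2) → Sph (m + 1)) = fun ξ => ⟨_, prf ξ⟩ := by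
    funext ξ
    apply Subtype.ext
    unfold ydir
    split_ifs <;> rfl
  rw [h2]
  apply Measurable.subtype_mk
  have hs : MeasurableSet {ξ : Sph (m + 2) | eqpart ξ = 0} :=
    (isClosed_eq continuous_eqpart continuous_const).measurableSet
  exact Measurable.ite hs measurable_const
    ((continuous_eqpart.norm.measurable.inv).smul continuous_eqpart.measurable)

end MarcinAux4

section MarcinAux5

open Real

variable {m : ℕ}

set_option maxHeartbeats 1000000 in
lemma continuous_F_aux (K : C(IccPi, ℝ) →L[ℝ] C(IccPi, ℝ)) (f : C(Sph (m + 2), ℝ)) :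
    Continuous fun q : (SOg (m + 2) × Sph (m + 1)) × IccPi =>
      K (merid (f.comp (rotCM q.1.1)) q.1.2) q.2 := by
  have h_b : Continuous fun q : (SOg (m + 2) × Sph (m + 1)) × IccPi =>
      ((q.2.1, q.1.2) : ℝ × Sph (m + 1)) :=
    (continuous_subtype_val.comp continuous_snd).prodMk (continuous_snd.comp continuous_fst)
  have h_c : Continuous fun q : (SOg (m + 2) × Sph (m + 1)) × IccPi =>
      phi q.2.1 q.1.2 :=
    Continuous.comp (g := fun p : ℝ × Sph (m + 1) => phi p.1 p.2)
      (f := fun q : (SOg (m + 2) × Sph (m + 1)) × IccPi => ((q.2.1, q.1.2) : ℝ × Sph (m + 1)))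
      continuous_phi2 h_b
  have hc1 : Continuous fun q : (SOg (m + 2) × Sph (m + 1)) × IccPi =>
      ((q.1.1, phi q.2.1 q.1.2) : SOg (m + 2) × Sph (m + 2)) :=
    (continuous_fst.comp continuous_fst).prodMk h_c
  have hc2 : Continuous fun q : (SOg (m + 2) × Sph (m + 1)) × IccPi =>
      rot q.1.1 (phi q.2.1 q.1.2) :=
    Continuous.comp (g := fun p : SOg (m + 2) × Sph (m + 2) => rot p.1 p.2)
      (f := fun q : (SOg (m + 2) × Sph (m + 1)) × IccPi =>
        ((q.1.1, phi q.2.1 q.1.2) : SOg (m + 2) × Sph (m + 2)))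
      continuous_rot2 hc1
  have hj : Continuous fun q : (SOg (m + 2) × Sph (m + 1)) × IccPi =>
      f (rot q.1.1 (phi q.2.1 q.1.2)) :=
    Continuous.comp (g := ⇑f)
      (f := fun q : (SOg (m + 2) × Sph (m + 1)) × IccPi => rot q.1.1 (phi q.2.1 q.1.2))
      f.continuous hc2
  let J : C((SOg (m + 2) × Sph (m + 1)) × IccPi, ℝ) := ⟨_, hj⟩
  have heq : (fun q : (SOg (m + 2) × Sph (m + 1)) × IccPi =>
      K (merid (f.comp (rotCM q.1.1)) q.1.2) q.2)
      = fun q => (K (J.curry q.1)) q.2 := by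
    funext q
    have h1 : J.curry q.1 = merid (f.comp (rotCM q.1.1)) q.1.2 := by
      ext t
      rfl
    rw [h1]
  rw [heq]
  have hK : Continuous fun q : (SOg (m + 2) × Sph (m + 1)) × IccPi =>
      ((K (J.curry q.1), q.2) : C(IccPi, ℝ) × IccPi) := by
    refine Continuous.prodMk ?_ continuous_snd
    exact Continuous.comp (g := ⇑K)
      (f := fun q : (SOg (m + 2) × Sph (m + 1)) × IccPi => J.curry q.1)
      K.continuous
      (Continuous.comp (g := ⇑J.curry)
        (f := fun q : (SOg (m + 2) × Sph (m + 1)) × IccPi => q.1)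
        J.curry.continuous continuous_fst)
  exact Continuous.comp (g := fun p : C(IccPi, ℝ) × IccPi => p.1 p.2)
    (f := fun q : (SOg (m + 2) × Sph (m + 1)) × IccPi =>
      ((K (J.curry q.1), q.2) : C(IccPi, ℝ) × IccPi))
    continuous_eval hK

set_option maxHeartbeats 1000000 in
lemma meas_F (K : C(IccPi, ℝ) →L[ℝ] C(IccPi, ℝ)) (f : C(Sph (m + 2), ℝ)) (ξ : Sph (m + 2)) :
    Measurable fun b : SOg (m + 2) => latOp K (f.comp (rotCM b)) (rot b⁻¹ ξ) := by
  have hq : Continuous fun b : SOg (m + 2) => rot b⁻¹ ξ :=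
    Continuous.comp (g := fun p : SOg (m + 2) × Sph (m + 2) => rot p.1 p.2)
      (f := fun b : SOg (m + 2) => ((b⁻¹, ξ) : SOg (m + 2) × Sph (m + 2)))
      continuous_rot2 (continuous_invSOg.prodMk continuous_const)
  have hY : Measurable fun b : SOg (m + 2) => ydir (rot b⁻¹ ξ) :=
    Measurable.comp (g := fun ζ : Sph (m + 2) => ydir ζ)
      (f := fun b : SOg (m + 2) => rot b⁻¹ ξ) meas_ydir hq.measurable
  have hT : Measurable fun b : SOg (m + 2) =>
      (⟨lat (rot b⁻¹ ξ), lat_mem_Icc _⟩ : IccPi) :=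
    (Continuous.subtype_mk
      (Continuous.comp (g := fun ζ : Sph (m + 2) => lat ζ)
        (f := fun b : SOg (m + 2) => rot b⁻¹ ξ) continuous_lat hq) _).measurable
  have hrepr : (fun b : SOg (m + 2) => latOp K (f.comp (rotCM b)) (rot b⁻¹ ξ))
      = fun b => (fun q : (SOg (m + 2) × Sph (m + 1)) × IccPi =>
          K (merid (f.comp (rotCM q.1.1)) q.1.2) q.2)
        ((b, ydir (rot b⁻¹ ξ)), ⟨lat (rot b⁻¹ ξ), lat_mem_Icc _⟩) := rfl
  rw [hrepr]
  exact Measurable.comp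
    (g := fun q : (SOg (m + 2) × Sph (m + 1)) × IccPi =>
      K (merid (f.comp (rotCM q.1.1)) q.1.2) q.2)
    (f := fun b : SOg (m + 2) =>
      (((b, ydir (rot b⁻¹ ξ)), ⟨lat (rot b⁻¹ ξ), lat_mem_Icc _⟩) :
        (SOg (m + 2) × Sph (m + 1)) × IccPi))
    (continuous_F_aux K f).measurable
    ((measurable_id.prodMk hY).prodMk hT)

lemma bound_F (K : C(IccPi, ℝ) →L[ℝ] C(IccPi, ℝ)) (f : C(Sph (m + 2), ℝ)) (ξ : Sph (m + 2))
    (b : SOg (m + 2)) :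
    |latOp K (f.comp (rotCM b)) (rot b⁻¹ ξ)| ≤ ‖K‖ * ‖f‖ := by
  have h1 : |latOp K (f.comp (rotCM b)) (rot b⁻¹ ξ)|
      ≤ ‖K (merid (f.comp (rotCM b)) (ydir (rot b⁻¹ ξ)))‖ := by
    rw [← Real.norm_eq_abs]
    exact (K (merid (f.comp (rotCM b)) (ydir (rot b⁻¹ ξ)))).norm_coe_le_norm _
  refine h1.trans ((K.le_opNorm _).trans ?_)
  refine mul_le_mul_of_nonneg_left ?_ (norm_nonneg K)
  rw [ContinuousMap.norm_le _ (norm_nonneg f)]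
  intro t
  exact f.norm_coe_le_norm _

set_option maxHeartbeats 1000000 in
set_option synthInstance.maxHeartbeats 400000 in
lemma meas_mulSOg {d : ℕ} : Measurable fun p : SOg d × SOg d => p.1 * p.2 :=
  continuous_mulSOg.measurable

set_option maxHeartbeats 1000000 in
set_option synthInstance.maxHeartbeats 400000 in
lemma meas_invSOg {d : ℕ} : Measurable fun b : SOg d => b⁻¹ :=
  continuous_invSOg.measurable

end MarcinAux5

section MarcinAux6

open MeasureTheory

/-- On a measurable group with a left-invariant probability measure, integrals of bounded
measurable functions are invariant under right translation. -/
lemma integral_right_mul_eq {G : Type*} [Group G] [MeasurableSpace G]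
    (hmul : Measurable fun p : G × G => p.1 * p.2)
    (hinv : Measurable fun g : G => g⁻¹)
    (μ : Measure G) [IsProbabilityMeasure μ]
    (hμ : ∀ g : G, MeasurePreserving (fun b => g * b) μ μ)
    (F : G → ℝ) (hF : Measurable F) {C : ℝ} (hC : ∀ b, |F b| ≤ C) (c : G) :
    ∫ b, F (b * c) ∂μ = ∫ b, F b ∂μ := by
  have hmulL : ∀ g : G, Measurable fun b : G => g * b := fun g =>
    hmul.comp (measurable_const.prodMk measurable_id)
  have hmulR : ∀ g : G, Measurable fun b : G => b * g := fun g =>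
    hmul.comp (measurable_id.prodMk measurable_const)
  -- left invariance of integrals
  have hleft : ∀ (g : G) (φ : G → ℝ), Measurable φ →
      ∫ b, φ (g * b) ∂μ = ∫ b, φ b ∂μ := by
    intro g φ hφ
    exact (hμ g).integral_comp (MeasurableEquiv.measurableEmbedding
      { toFun := fun b => g * b
        invFun := fun b => g⁻¹ * b
        left_inv := fun b => by simp
        right_inv := fun b => by simp
        measurable_toFun := hmulL g
        measurable_invFun := hmulL g⁻¹ }) φ
  set ν : Measure G := μ.map (fun g => g⁻¹) with hν
  have hνprob : IsProbabilityMeasure ν := Measure.isProbabilityMeasure_map hinv.aemeasurable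
  have hmap : ∀ (φ : G → ℝ), Measurable φ → ∫ b, φ b ∂ν = ∫ b, φ b⁻¹ ∂μ := by
    intro φ hφ
    rw [hν, integral_map hinv.aemeasurable hφ.aestronglyMeasurable]
  -- right invariance of ν
  have hright : ∀ (φ : G → ℝ), Measurable φ → ∀ c : G,
      ∫ b, φ (b * c) ∂ν = ∫ b, φ b ∂ν := by
    intro φ hφ c
    rw [hmap (fun b => φ (b * c)) (by exact hφ.comp (hmulR c)), hmap φ hφ]
    have h1 : ∀ b : G, φ (b⁻¹ * c) = (fun x => φ x⁻¹) (c⁻¹ * b) := by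
      intro b
      simp [_root_.mul_inv_rev]
    calc ∫ b, φ (b⁻¹ * c) ∂μ = ∫ b, (fun x => φ x⁻¹) (c⁻¹ * b) ∂μ := by simp_rw [h1]
      _ = ∫ b, φ b⁻¹ ∂μ := hleft c⁻¹ _ (hφ.comp hinv)
  -- ∫ dμ = ∫ dν for bounded measurable functions
  have key : ∀ (φ : G → ℝ), Measurable φ → (∀ b, |φ b| ≤ C) →
      ∫ b, φ b ∂μ = ∫ b, φ b ∂ν := by
    intro φ hφ hφC
    have hint : Integrable (Function.uncurry fun a b => φ (a * b)) (ν.prod μ) := by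
      refine ⟨(hφ.comp hmul).aestronglyMeasurable, ?_⟩
      refine MeasureTheory.HasFiniteIntegral.of_bounded (C := C) ?_
      exact ae_of_all _ fun p => by simpa [Real.norm_eq_abs, Function.uncurry_def] using hφC (p.1 * p.2)
    have hswap := MeasureTheory.integral_integral_swap hint
    have hL : ∫ a, ∫ b, φ (a * b) ∂μ ∂ν = ∫ b, φ b ∂μ := by
      have h : ∀ a : G, ∫ b, φ (a * b) ∂μ = ∫ b, φ b ∂μ := fun a => hleft a φ hφ
      simp_rw [h]
      simp
    have hR : ∫ b, ∫ a, φ (a * b) ∂ν ∂μ = ∫ b, φ b ∂ν := by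
      have h : ∀ b : G, ∫ a, φ (a * b) ∂ν = ∫ a, φ a ∂ν := fun b => hright φ hφ b
      simp_rw [h]
      simp
    rw [← hL, hswap, hR]
  calc ∫ b, F (b * c) ∂μ = ∫ b, F (b * c) ∂ν :=
        key _ (hF.comp (hmulR c)) (fun b => hC _)
    _ = ∫ b, F b ∂ν := hright F hF c
    _ = ∫ b, F b ∂μ := (key F hF hC).symm

end MarcinAux6

/-- `k = m + 1 ≥ 2`: the Marcinkiewicz average of `K^# = (L - ρLρ)^#` vanishes. -/
theorem marcinkiewicz_average_antisymmetric_latitudinal_vanishes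
    (m : ℕ) (hm : 1 ≤ m)
    (L : C(IccPi, ℝ) →L[ℝ] C(IccPi, ℝ))
    (hL : ∀ g : C(IccPi, ℝ), g loPt = 0 → g hiPt = 0 → L g loPt = 0 ∧ L g hiPt = 0)
    (μ : Measure (SOg (m + 2))) [IsProbabilityMeasure μ]
    (hμ : ∀ g : SOg (m + 2), MeasurePreserving (fun b => g * b) μ μ)
    (f : C(Sph (m + 2), ℝ)) (ξ : Sph (m + 2)) :
    ∫ b : SOg (m + 2),
      latOp (L - reflOp.comp (L.comp reflOp)) (f.comp (rotCM b)) (rot b⁻¹ ξ) ∂μ = 0 := by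
  set K : C(IccPi, ℝ) →L[ℝ] C(IccPi, ℝ) := L - reflOp.comp (L.comp reflOp) with hK
  set F : SOg (m + 2) → ℝ := fun b => latOp K (f.comp (rotCM b)) (rot b⁻¹ ξ) with hF
  have h1 : ∫ b, F (b * cSO m) ∂μ = ∫ b, F b ∂μ :=
    integral_right_mul_eq meas_mulSOg meas_invSOg μ hμ
      F (meas_F K f ξ) (bound_F K f ξ) (cSO m)
  have h2 : ∫ b, F (b * cSO m) ∂μ = - ∫ b, F b ∂μ := by
    have hpt : ∀ b, F (b * cSO m) = - F b := fun b => F_flip hm L f ξ b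
    simp_rw [hpt]
    exact integral_neg F
  have h3 : ∫ b, F b ∂μ = 0 := by linarith
  exact h3

end
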